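/- Let γ̄ > 0, s < 0, 0 < α ≤ 1 and β ≥ 0 with α + β ≤ 1. Then the moment generating function of the SOSF SNR, obtained by averaging the conditional Rician MGF over the exponential mixing variable, admits the closed form ∫₀^∞ (1/(1 - s γ̄ (1 - β - α(1 - x)))) e^{ s β γ̄ / (1 - s γ̄ (1 - β - α(1 - x))) } e^{-x} dx = -( e^{ (s γ̄ (1 - α - β) - 1)/(s γ̄ α) } / (s γ̄ α) ) · Γ(0, (s(1 - α - β)γ̄ - 1)/(s α γ̄), β/α). -/

import Mathlib

open MeasureTheory Real

/-- Generalized incomplete gamma function `Γ(a, x, b) = ∫ₓ^∞ t^{a-1} e^{-t} e^{-b/t} dt`. -/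
noncomputable def genGamma (a x b : ℝ) : ℝ :=
  ∫ t in Set.Ioi x, t ^ (a - 1) * Real.exp (-t) * Real.exp (-b / t)

/-- Translation of an integral over `Ioi`. -/
lemma integral_Ioi_translate (c : ℝ) (g : ℝ → ℝ) :
    ∫ t in Set.Ioi c, g t = ∫ x in Set.Ioi (0 : ℝ), g (x + c) := by
  have he : MeasurableEmbedding (fun x : ℝ => x + c) :=
    (MeasurableEquiv.addRight c).measurableEmbedding
  calc ∫ t in Set.Ioi c, g t
      = ∫ t in Set.Ioi c, g t ∂(Measure.map (fun x : ℝ => x + c) volume) := by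
        rw [map_add_right_eq_self]
    _ = ∫ x in (fun x : ℝ => x + c) ⁻¹' Set.Ioi c, g (x + c) := he.setIntegral_map _ _
    _ = ∫ x in Set.Ioi (0 : ℝ), g (x + c) := by
        congr 1; ext x; simp

/-- **Closed form of the SOSF SNR MGF.** For `γ̄ > 0`, `s < 0`, `0 < α ≤ 1`, `β ≥ 0`
with `α + β ≤ 1`, the exponential average of the conditional Rician MGF equals
`-( e^{(sγ̄(1-α-β)-1)/(sγ̄α)} / (sγ̄α) ) Γ(0, (s(1-α-β)γ̄-1)/(sαγ̄), β/α)`. -/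
theorem sosf_mgf (γbar s α β : ℝ) (hγbar : 0 < γbar) (hs : s < 0)
    (hα0 : 0 < α) (hα1 : α ≤ 1) (hβ : 0 ≤ β) (hαβ : α + β ≤ 1) :
    ∫ x in Set.Ioi (0 : ℝ),
        (1 / (1 - s * γbar * (1 - β - α * (1 - x)))) *
          Real.exp (s * β * γbar / (1 - s * γbar * (1 - β - α * (1 - x)))) *
          Real.exp (-x)
      = -(Real.exp ((s * γbar * (1 - α - β) - 1) / (s * γbar * α)) / (s * γbar * α)) *
          genGamma 0 ((s * (1 - α - β) * γbar - 1) / (s * α * γbar)) (β / α) := by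
  have hsne : s ≠ 0 := ne_of_lt hs
  have hγne : γbar ≠ 0 := ne_of_gt hγbar
  have hαne : α ≠ 0 := ne_of_gt hα0
  have hsγ : s * γbar < 0 := mul_neg_of_neg_of_pos hs hγbar
  have hB0 : 0 < -(s * γbar * α) := by nlinarith
  set B : ℝ := -(s * γbar * α) with hBdef
  set A : ℝ := 1 - s * γbar * (1 - α - β) with hAdef
  have hA0 : 0 < A := by
    have h1 : 0 ≤ 1 - α - β := by linarith
    nlinarith
  set c : ℝ := A / B with hcdef
  have hc0 : 0 < c := div_pos hA0 hB0
  have hBne : B ≠ 0 := ne_of_gt hB0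
  clear_value B A c
  have hBne' : -(s * γbar * α) ≠ 0 := hBdef ▸ hBne
  have hden1 : s * α * γbar ≠ 0 := by
    exact mul_ne_zero (mul_ne_zero hsne hαne) hγne
  have hden2 : s * γbar * α ≠ 0 := by
    exact mul_ne_zero (mul_ne_zero hsne hγne) hαne
  have harg : (s * (1 - α - β) * γbar - 1) / (s * α * γbar) = c := by
    rw [hcdef, hAdef, hBdef, div_eq_div_iff hden1 hBne']
    ring
  have hexp : (s * γbar * (1 - α - β) - 1) / (s * γbar * α) = c := by
    rw [hcdef, hAdef, hBdef, div_eq_div_iff hden2 hBne']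
    ring
  rw [harg, hexp, genGamma,
    integral_Ioi_translate c (fun t => t ^ ((0:ℝ) - 1) * Real.exp (-t) * Real.exp (-(β/α) / t)),
    ← MeasureTheory.integral_const_mul]
  apply setIntegral_congr_fun measurableSet_Ioi
  intro x hx
  simp only [Set.mem_Ioi] at hx
  beta_reduce
  have hxc : 0 < x + c := add_pos hx hc0
  have hD : 1 - s * γbar * (1 - β - α * (1 - x)) = B * (x + c) := by
    rw [hcdef, mul_add, mul_div_cancel₀ _ hBne, hAdef, hBdef]
    ring
  have h1 : (x + c) ^ ((0:ℝ) - 1) = (x + c)⁻¹ := by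
    rw [zero_sub, Real.rpow_neg_one]
  have h2 : s * β * γbar / (B * (x + c)) = -(β / α) / (x + c) := by
    rw [div_eq_div_iff (by positivity) (ne_of_gt hxc), hBdef]
    field_simp
  have hsga : s * γbar * α = -B := by rw [hBdef]; ring
  rw [hD, h2, h1, show -(x + c) = -c + -x by ring, Real.exp_add, Real.exp_neg c, hsga]
  have hec : Real.exp c ≠ 0 := Real.exp_ne_zero c
  have hxcne : x + c ≠ 0 := ne_of_gt hxc
  field_simp
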